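/- The nonzero left-symmetric points of ℓ∞ are exactly the nonzero scalar multiples of the standard unit vectors e_n, n ∈ ℕ. -/

import Mathlib

open ENNReal

/-- Birkhoff-James orthogonality in `ℓ∞`. -/
def BJInf {𝕂 : Type*} [RCLike 𝕂] (x y : lp (fun _ : ℕ => 𝕂) ∞) : Prop :=
  ∀ lam : 𝕂, ‖x‖ ≤ ‖x + lam • y‖

theorem ellInfty_aux_real (a b c : ℝ) (ha : a ≠ 0) (hb : b ≠ 0) :
    a / (2 * b) * c / a * b = c / 2 := by
  field_simp

theorem ellInfty_norm_single {𝕂 : Type*} [RCLike 𝕂] (n : ℕ) (c : 𝕂) :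
    ‖(lp.single ∞ n c : lp (fun _ : ℕ => 𝕂) ∞)‖ = ‖c‖ := by
  apply le_antisymm
  · apply lp.norm_le_of_forall_le (norm_nonneg c)
    intro i
    rcases eq_or_ne i n with h|h
    · subst h; rw [lp.single_apply_self]
    · rw [lp.single_apply_ne _ _ _ h]; simp
  · have := lp.norm_apply_le_norm (E := fun _ : ℕ => 𝕂) (p := ∞) top_ne_zero
      (lp.single ∞ n c) n
    rwa [lp.single_apply_self] at this

theorem ellInfty_bj_single_imp {𝕂 : Type*} [RCLike 𝕂] {n : ℕ} {c : 𝕂} (hc : c ≠ 0)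
    {y : lp (fun _ : ℕ => 𝕂) ∞}
    (h : BJInf (lp.single ∞ n c) y) : y n = 0 := by
  by_contra hyn
  have hyn' : 0 < ‖y n‖ := norm_pos_iff.mpr hyn
  have hyle : ‖y n‖ ≤ ‖y‖ := lp.norm_apply_le_norm top_ne_zero y n
  have hy : 0 < ‖y‖ := lt_of_lt_of_le hyn' hyle
  have hc' : 0 < ‖c‖ := norm_pos_iff.mpr hc
  set ε : ℝ := ‖y n‖ / (2 * ‖y‖) with hε
  have hε0 : 0 < ε := div_pos hyn' (by positivity)
  have hεhalf : ε ≤ 1/2 := by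
    rw [hε, div_le_div_iff₀ (by positivity) (by norm_num)]
    nlinarith
  set lam : 𝕂 := -((ε : 𝕂) * c) / (y n) with hlam
  have hlamnorm : ‖lam‖ = ε * ‖c‖ / ‖y n‖ := by
    rw [hlam, norm_div, norm_neg, norm_mul, RCLike.norm_ofReal, abs_of_pos hε0]
  have hkey : ‖lp.single ∞ n c + lam • y‖ ≤ (1 - ε) * ‖c‖ := by
    apply lp.norm_le_of_forall_le (by nlinarith)
    intro i
    rcases eq_or_ne i n with rfl|hi
    · have hco : ((lp.single ∞ i c + lam • y : lp (fun _ : ℕ => 𝕂) ∞)) i = c + lam * y i := by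
        change (lp.single ∞ i c : lp (fun _ : ℕ => 𝕂) ∞) i + lam * y i = _
        simp [lp.single_apply_self]
      have hly : lam * y i = -((ε : 𝕂) * c) := by
        rw [hlam, div_mul_cancel₀ _ hyn]
      rw [hco, hly]
      have : c + -((ε : 𝕂) * c) = ((1 - ε : ℝ) : 𝕂) * c := by push_cast; ring
      rw [this, norm_mul, RCLike.norm_ofReal, abs_of_nonneg (by linarith)]
    · have hco : ((lp.single ∞ n c + lam • y : lp (fun _ : ℕ => 𝕂) ∞)) i = lam * y i := by
        change (lp.single ∞ n c : lp (fun _ : ℕ => 𝕂) ∞) i + lam * y i = _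
        rw [lp.single_apply_ne _ _ _ hi]; simp
      rw [hco, norm_mul, hlamnorm]
      have h1 : ‖y i‖ ≤ ‖y‖ := lp.norm_apply_le_norm top_ne_zero y i
      have h2 : ε * ‖c‖ / ‖y n‖ * ‖y i‖ ≤ ε * ‖c‖ / ‖y n‖ * ‖y‖ := by
        apply mul_le_mul_of_nonneg_left h1 (by positivity)
      have h3 : ε * ‖c‖ / ‖y n‖ * ‖y‖ = ‖c‖ / 2 := by
        rw [hε]; exact ellInfty_aux_real _ _ _ (ne_of_gt hyn') (ne_of_gt hy)
      nlinarith
  have := h lam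
  rw [ellInfty_norm_single] at this
  nlinarith

theorem ellInfty_bj_of_coord_zero {𝕂 : Type*} [RCLike 𝕂] {n : ℕ} (c : 𝕂)
    {y : lp (fun _ : ℕ => 𝕂) ∞} (hyn : y n = 0) :
    BJInf y (lp.single ∞ n c) := by
  intro lam
  apply lp.norm_le_of_forall_le (norm_nonneg _)
  intro i
  rcases eq_or_ne i n with rfl|hi
  · rw [hyn, norm_zero]; exact norm_nonneg _
  · have hco : y i = ((y + lam • lp.single ∞ n c : lp (fun _ : ℕ => 𝕂) ∞)) i := by
      change _ = y i + lam * (lp.single ∞ n c : lp (fun _ : ℕ => 𝕂) ∞) i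
      rw [lp.single_apply_ne _ _ _ hi]; simp
    rw [hco]
    exact lp.norm_apply_le_norm top_ne_zero _ i

theorem ellInfty_leftSymmetric_iff {𝕂 : Type*} [RCLike 𝕂]
    (x : lp (fun _ : ℕ => 𝕂) ∞) (hx : x ≠ 0) :
    (∀ y : lp (fun _ : ℕ => 𝕂) ∞, BJInf x y → BJInf y x) ↔
      ∃ (n : ℕ) (c : 𝕂), c ≠ 0 ∧ x = lp.single ∞ n c := by
  constructor
  · intro hsym
    obtain ⟨n, hn⟩ : ∃ n, x n ≠ 0 := by
      by_contra h
      push_neg at h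
      exact hx (by ext i; simpa using h i)
    refine ⟨n, x n, hn, ?_⟩
    have hzero : ∀ m, m ≠ n → x m = 0 := by
      intro m hmn
      by_contra hm
      by_cases hbm : BJInf x (lp.single ∞ m (1:𝕂))
      · exact hm (ellInfty_bj_single_imp one_ne_zero (hsym _ hbm))
      by_cases hbn : BJInf x (lp.single ∞ n (1:𝕂))
      · exact hn (ellInfty_bj_single_imp one_ne_zero (hsym _ hbn))
      unfold BJInf at hbm hbn
      push_neg at hbm hbn
      obtain ⟨l1, h1⟩ := hbm
      obtain ⟨l2, h2⟩ := hbn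
      have hle : ‖x‖ ≤ max ‖x + l1 • lp.single ∞ m 1‖ ‖x + l2 • lp.single ∞ n 1‖ := by
        apply lp.norm_le_of_forall_le (le_max_of_le_left (norm_nonneg _))
        intro i
        rcases eq_or_ne i m with rfl|him
        · have hco : x i = ((x + l2 • lp.single ∞ n 1 : lp (fun _ : ℕ => 𝕂) ∞)) i := by
            change _ = x i + l2 * (lp.single ∞ n 1 : lp (fun _ : ℕ => 𝕂) ∞) i
            rw [lp.single_apply_ne _ _ _ hmn]; simp
          rw [hco]
          exact le_max_of_le_right (lp.norm_apply_le_norm top_ne_zero _ i)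
        · have hco : x i = ((x + l1 • lp.single ∞ m 1 : lp (fun _ : ℕ => 𝕂) ∞)) i := by
            change _ = x i + l1 * (lp.single ∞ m 1 : lp (fun _ : ℕ => 𝕂) ∞) i
            rw [lp.single_apply_ne _ _ _ him]; simp
          rw [hco]
          exact le_max_of_le_left (lp.norm_apply_le_norm top_ne_zero _ i)
      exact absurd (lt_of_le_of_lt hle (max_lt h1 h2)) (lt_irrefl _)
    ext i
    rcases eq_or_ne i n with rfl|hi
    · rw [lp.single_apply_self]
    · rw [lp.single_apply_ne _ _ _ hi, hzero i hi]
  · rintro ⟨n, c, hc, rfl⟩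
    intro y hxy
    exact ellInfty_bj_of_coord_zero c (ellInfty_bj_single_imp hc hxy)
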